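/- Let n ≥ 1, let L_n be a family of n-tuples L = (σ_1,...,σ_n) of words in {r,s}ⁿ such that all words occurring in all tuples of L_n are pairwise distinct (if σ_i of tuple L equals σ'_j of tuple L' then L = L' and i = j). Let T_L be defined as in the previous context. Then for any word σ ∈ {r,s}^m with 0 ≤ m ≤ n and any EL concept expression C over the signature: if there exists L = (σ_1,...,σ_n) ∈ L_n with T_L ⊨ C ⊑ ∃σ.M, then either (1) there exists i ≤ n such that σ = σ_i and C has A, A_i, or B_i as a top-level conjunct, or (2) ∅ ⊨ C ⊑ ∃σ.M. -/

import Mathlib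

/-- EL concept expressions over concept names `C` and role names `R`. -/
inductive ELC (C R : Type) : Type where
  | top : ELC C R
  | cn : C → ELC C R
  | conj : ELC C R → ELC C R → ELC C R
  | ex : R → ELC C R → ELC C R

/-- An interpretation. -/
structure Interp (C R : Type) where
  dom : Type
  cname : C → Set dom
  rname : R → Set (dom × dom)

/-- Semantics of EL concept expressions. -/
def Interp.sem {C R : Type} (I : Interp C R) : ELC C R → Set I.dom
  | .top => Set.univ
  | .cn A => I.cname A
  | .conj c d => I.sem c ∩ I.sem d
  | .ex r c => {x | ∃ y, (x, y) ∈ I.rname r ∧ y ∈ I.sem c}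

/-- The pairwise distinct concept names `A`, `M`, `X_i`, `A_i`, `B_i`. -/
inductive CN : Type where
  | A : CN
  | M : CN
  | X : ℕ → CN
  | Ai : ℕ → CN
  | Bi : ℕ → CN

/-- The two distinct role names `r` and `s`. -/
inductive RN : Type where
  | r : RN
  | s : RN

/-- `∃σ.C` for a word `σ` over `{r,s}`: nested existential restrictions. -/
def exSeq (w : List RN) (c : ELC CN RN) : ELC CN RN :=
  w.foldr ELC.ex c

/-- Conjunction of a list of concepts (`⊤` for the empty list). -/
def conjList (l : List (ELC CN RN)) : ELC CN RN :=
  l.foldr ELC.conj .top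

/-- The TBox `T_0 = {X_i ⊑ ∃r.X_{i+1} ⊓ ∃s.X_{i+1} : 0 ≤ i < n}`. -/
def T0 (n : ℕ) : List (ELC CN RN × ELC CN RN) :=
  (List.range n).map fun i =>
    (.cn (.X i), .conj (.ex .r (.cn (.X (i + 1)))) (.ex .s (.cn (.X (i + 1)))))

/-- The concept `X_0 ⊓ ∃σ_1.M ⊓ … ⊓ ∃σ_n.M`. -/
def bigA (n : ℕ) (L : Fin n → List RN) : ELC CN RN :=
  .conj (.cn (.X 0)) (conjList ((List.finRange n).map fun i => exSeq (L i) (.cn .M)))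

/-- The TBox `T_L`: `T_0` together with `A_i ⊑ ∃σ_i.M ⊓ X_0`,
`B_i ⊑ ∃σ_i.M ⊓ X_0` and the equivalence
`A ≡ X_0 ⊓ ∃σ_1.M ⊓ … ⊓ ∃σ_n.M` (given as two inclusions). -/
def TL (n : ℕ) (L : Fin n → List RN) : List (ELC CN RN × ELC CN RN) :=
  T0 n ++
  ((List.finRange n).map fun i =>
    (.cn (.Ai i.1), .conj (exSeq (L i) (.cn .M)) (.cn (.X 0)))) ++
  ((List.finRange n).map fun i =>
    (.cn (.Bi i.1), .conj (exSeq (L i) (.cn .M)) (.cn (.X 0)))) ++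
  [(.cn .A, bigA n L), (bigA n L, .cn .A)]

/-- `T ⊨ c ⊑ d`: the inclusion holds in every model of the TBox `T`. -/
def Entails (T : List (ELC CN RN × ELC CN RN)) (c d : ELC CN RN) : Prop :=
  ∀ I : Interp CN RN, (∀ p ∈ T, I.sem p.1 ⊆ I.sem p.2) → I.sem c ⊆ I.sem d


/-- `TopConj g c`: `g` is a top-level conjunct of `c` (a conjunct not
nested inside an existential restriction). -/
inductive TopConj {C R : Type} : ELC C R → ELC C R → Prop where
  | base (c : ELC C R) : TopConj c c
  | left {g a : ELC C R} (b : ELC C R) : TopConj g a → TopConj g (.conj a b)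
  | right {g b : ELC C R} (a : ELC C R) : TopConj g b → TopConj g (.conj a b)

/-- The concept names allowed in the signature of the TBoxes `T_L`. -/
def goodCN (n : ℕ) : CN → Prop
  | .A => True
  | .M => True
  | .X i => i ≤ n
  | .Ai i => i < n
  | .Bi i => i < n

/-- The concept uses only concept names from the signature. -/
def InSig (n : ℕ) : ELC CN RN → Prop
  | .top => True
  | .cn a => goodCN n a
  | .conj c d => InSig n c ∧ InSig n d
  | .ex _ c => InSig n c

/-! ### Auxiliary development for the canonical model -/

theorem topConj_trans {C R : Type} {g x y : ELC C R}
    (h1 : TopConj g x) (h2 : TopConj x y) : TopConj g y := by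
  induction h2 with
  | base => exact h1
  | left b h ih => exact .left b ih
  | right a h ih => exact .right a ih

theorem topConj_sound {g c : ELC CN RN} (h : TopConj g c) (J : Interp CN RN) :
    J.sem c ⊆ J.sem g := by
  induction h with
  | base => exact subset_rfl
  | left b h ih => exact Set.inter_subset_left.trans ih
  | right a h ih => exact Set.inter_subset_right.trans ih

/-- Trigger for the word `σ_i`: `A`, `A_i` or `B_i` is a top-level conjunct. -/
def trig (n : ℕ) (i : Fin n) (c : ELC CN RN) : Prop :=
  TopConj (.cn .A) c ∨ TopConj (.cn (.Ai i.1)) c ∨ TopConj (.cn (.Bi i.1)) c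

def anyTrig (n : ℕ) (c : ELC CN RN) : Prop := ∃ i : Fin n, trig n i c

/-- The canonical extension of the label by `X_j`. -/
def hasX (n j : ℕ) (c : ELC CN RN) : Prop :=
  TopConj (.cn (.X j)) c ∨ (j = 0 ∧ anyTrig n c)

/-- Edges of the canonical model. -/
def edge (n : ℕ) (L : Fin n → List RN) (ρ : RN) (c d : ELC CN RN) : Prop :=
  TopConj (.ex ρ d) c
  ∨ (∃ j, hasX n j c ∧ j < n ∧ d = .cn (.X (j + 1)))
  ∨ (∃ i : Fin n, trig n i c ∧ (L i).head? = some ρ ∧ d = exSeq (L i).tail (.cn .M))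

/-- An `edge`-path along the word `w` ending in an `M`-labelled node. -/
def pathM (n : ℕ) (L : Fin n → List RN) : List RN → ELC CN RN → Prop
  | [], c => TopConj (.cn .M) c
  | ρ :: w, c => ∃ d, edge n L ρ c d ∧ pathM n L w d

/-- The canonical model of `T_L`. -/
def canI (n : ℕ) (L : Fin n → List RN) : Interp CN RN where
  dom := ELC CN RN
  cname := fun N => match N with
    | .M => {c | TopConj (.cn .M) c}
    | .X j => {c | hasX n j c}
    | .Ai i => {c | TopConj (.cn (.Ai i)) c}
    | .Bi i => {c | TopConj (.cn (.Bi i)) c}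
    | .A => {c | TopConj (.cn .A) c ∨ (hasX n 0 c ∧ ∀ i : Fin n, pathM n L (L i) c)}
  rname := fun ρ => {p | edge n L ρ p.1 p.2}

theorem sem_exSeqM (n : ℕ) (L : Fin n → List RN) :
    ∀ (w : List RN) (c : ELC CN RN),
      c ∈ (canI n L).sem (exSeq w (.cn .M)) ↔ pathM n L w c := by
  intro w
  induction w with
  | nil => intro c; exact Iff.rfl
  | cons ρ w ih =>
    intro c
    constructor
    · rintro ⟨d, hd, hsem⟩; exact ⟨d, hd, (ih d).mp hsem⟩
    · rintro ⟨d, hd, hp⟩; exact ⟨d, hd, (ih d).mpr hp⟩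

theorem pathM_exSeq (n : ℕ) (L : Fin n → List RN) :
    ∀ w : List RN, pathM n L w (exSeq w (.cn .M)) := by
  intro w
  induction w with
  | nil => exact .base _
  | cons ρ w ih => exact ⟨exSeq w (.cn .M), Or.inl (.base _), ih⟩

theorem pathM_of_trig (n : ℕ) (L : Fin n → List RN)
    (hlen : ∀ i, (L i).length = n) (hn : 1 ≤ n) {i : Fin n} {c : ELC CN RN}
    (h : trig n i c) : pathM n L (L i) c := by
  cases hLi : L i with
  | nil => have := hlen i; rw [hLi] at this; simp at this; omega
  | cons ρ t =>
    exact ⟨exSeq t (.cn .M),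
      Or.inr (Or.inr ⟨i, h, by simp [hLi], by simp [hLi]⟩),
      pathM_exSeq n L t⟩

theorem conjList_sem (J : Interp CN RN) :
    ∀ (l : List (ELC CN RN)) (x : J.dom),
      x ∈ J.sem (conjList l) ↔ ∀ d ∈ l, x ∈ J.sem d := by
  intro l
  induction l with
  | nil => intro x; simp [conjList, Interp.sem]
  | cons a l ih =>
    intro x
    constructor
    · rintro ⟨h1, h2⟩ d hd
      rcases List.mem_cons.mp hd with rfl | hd
      · exact h1
      · exact (ih x).mp h2 d hd
    · intro h
      exact ⟨h a List.mem_cons_self, (ih x).mpr fun d hd => h d (List.mem_cons_of_mem a hd)⟩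

/-- Every concept is satisfied by itself in the canonical model (and more
generally by anything having it as a top-level conjunct). -/
theorem canonical (n : ℕ) (L : Fin n → List RN) :
    ∀ (E D : ELC CN RN), TopConj E D → D ∈ (canI n L).sem E := by
  intro E
  induction E with
  | top => intro D _; trivial
  | cn N =>
    intro D h
    cases N with
    | A => exact Or.inl h
    | M => exact h
    | X j => exact Or.inl h
    | Ai i => exact h
    | Bi i => exact h
  | conj a b iha ihb =>
    intro D h
    exact ⟨iha D (topConj_trans (.left b (.base a)) h),
           ihb D (topConj_trans (.right a (.base b)) h)⟩
  | ex ρ e ihe =>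
    intro D h
    exact ⟨e, Or.inl h, ihe e (.base e)⟩

/-- The canonical model is a model of `T_L`. -/
theorem canI_models (n : ℕ) (L : Fin n → List RN)
    (hlen : ∀ i, (L i).length = n) (hn : 1 ≤ n) :
    ∀ p ∈ TL n L, (canI n L).sem p.1 ⊆ (canI n L).sem p.2 := by
  have hbigA : ∀ c, hasX n 0 c → (∀ i : Fin n, pathM n L (L i) c) →
      c ∈ (canI n L).sem (bigA n L) := by
    intro c hX hp
    refine ⟨hX, (conjList_sem (canI n L) _ c).mpr ?_⟩
    intro d hd
    obtain ⟨i, _, rfl⟩ := List.mem_map.mp hd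
    exact (sem_exSeqM n L (L i) c).mpr (hp i)
  intro p hp
  simp only [TL, List.mem_append, List.mem_cons, List.mem_singleton,
    List.mem_map, T0, List.mem_range] at hp
  rcases hp with ((⟨j, hj, rfl⟩ | ⟨i, _, rfl⟩) | ⟨i, _, rfl⟩) | (rfl | rfl | h)
  · -- X_j ⊑ ∃r.X_{j+1} ⊓ ∃s.X_{j+1}
    intro c hc
    exact ⟨⟨.cn (.X (j + 1)), Or.inr (Or.inl ⟨j, hc, hj, rfl⟩), Or.inl (.base _)⟩,
           ⟨.cn (.X (j + 1)), Or.inr (Or.inl ⟨j, hc, hj, rfl⟩), Or.inl (.base _)⟩⟩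
  · -- A_i ⊑ ∃σ_i.M ⊓ X_0
    intro c hc
    exact ⟨(sem_exSeqM n L (L i) c).mpr (pathM_of_trig n L hlen hn (Or.inr (Or.inl hc))),
           Or.inr ⟨rfl, ⟨i, Or.inr (Or.inl hc)⟩⟩⟩
  · -- B_i ⊑ ∃σ_i.M ⊓ X_0
    intro c hc
    exact ⟨(sem_exSeqM n L (L i) c).mpr (pathM_of_trig n L hlen hn (Or.inr (Or.inr hc))),
           Or.inr ⟨rfl, ⟨i, Or.inr (Or.inr hc)⟩⟩⟩
  · -- A ⊑ bigA
    intro c hc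
    rcases hc with hA | ⟨hX, hp⟩
    · exact hbigA c (Or.inr ⟨rfl, ⟨⟨0, hn⟩, Or.inl hA⟩⟩)
        (fun i => pathM_of_trig n L hlen hn (Or.inl hA))
    · exact hbigA c hX hp
  · -- bigA ⊑ A
    rintro c ⟨hX, hconj⟩
    refine Or.inr ⟨hX, fun i => (sem_exSeqM n L (L i) c).mp ?_⟩
    exact (conjList_sem (canI n L) _ c).mp hconj _
      (List.mem_map.mpr ⟨i, List.mem_finRange i, rfl⟩)
  · cases h

/-- No path from an `X_k` node ever reaches `M`. -/
theorem noPathX (n : ℕ) (L : Fin n → List RN) :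
    ∀ (w : List RN) (k : ℕ), ¬ pathM n L w (.cn (.X k)) := by
  intro w
  induction w with
  | nil => intro k h; cases h
  | cons ρ w ih =>
    rintro k ⟨d, hedge, hp⟩
    rcases hedge with htc | ⟨j, hj, _, rfl⟩ | ⟨i, htrig, _, _⟩
    · cases htc
    · rcases hj with hj | ⟨_, ⟨i, htrig⟩⟩
      · cases hj; exact ih _ hp
      · rcases htrig with h | h | h <;> cases h
    · rcases htrig with h | h | h <;> cases h

/-- Paths starting at a path node `exSeq u M` read exactly the word `u`. -/
theorem pathM_exSeq_inv (n : ℕ) (L : Fin n → List RN) :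
    ∀ (u w : List RN), pathM n L w (exSeq u (.cn .M)) → w = u := by
  intro u
  induction u with
  | nil =>
    intro w h
    cases w with
    | nil => rfl
    | cons ρ w =>
      obtain ⟨d, hedge, _⟩ := h
      rcases hedge with htc | ⟨j, hj, _, _⟩ | ⟨i, htrig, _, _⟩
      · cases htc
      · rcases hj with hj | ⟨_, ⟨i, htrig⟩⟩
        · cases hj
        · rcases htrig with h | h | h <;> cases h
      · rcases htrig with h | h | h <;> cases h
  | cons ρ' u ih =>
    intro w h
    cases w with
    | nil => cases h
    | cons ρ w =>
      obtain ⟨d, hedge, hp⟩ := h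
      rcases hedge with htc | ⟨j, hj, _, _⟩ | ⟨i, htrig, _, _⟩
      · cases htc; rw [ih w hp]
      · rcases hj with hj | ⟨_, ⟨i, htrig⟩⟩
        · cases hj
        · rcases htrig with h | h | h <;> cases h
      · rcases htrig with h | h | h <;> cases h

/-- KEY: analysis of paths to `M` in the canonical model. -/
theorem key (n : ℕ) (L : Fin n → List RN) (hlen : ∀ i, (L i).length = n) :
    ∀ (w : List RN), w.length ≤ n → ∀ D, pathM n L w D →
      (∃ i : Fin n, w = L i ∧ trig n i D) ∨ Entails [] D (exSeq w (.cn .M)) := by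
  intro w
  induction w with
  | nil =>
    intro _ D h
    exact Or.inr fun J _ => topConj_sound h J
  | cons ρ w ih =>
    intro hw D hp
    obtain ⟨d, hedge, hpd⟩ := hp
    rcases hedge with htc | ⟨j, _, _, rfl⟩ | ⟨i, htrig, hhead, rfl⟩
    · rcases ih (Nat.le_of_succ_le hw) d hpd with ⟨i, rfl, _⟩ | hent
      · have h1 : (L i).length < (ρ :: L i).length := Nat.lt_succ_self _
        have h2 := hlen i
        simp only [List.length_cons] at hw
        omega
      · refine Or.inr fun J hJ x hx => ?_
        obtain ⟨y, hy, hyd⟩ := topConj_sound htc J hx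
        exact ⟨y, hy, hent J hJ hyd⟩
    · exact absurd hpd (noPathX n L w _)
    · have hw' := pathM_exSeq_inv n L (L i).tail w hpd
      cases hLi : L i with
      | nil => rw [hLi] at hhead; cases hhead
      | cons a t =>
        rw [hLi] at hhead hw'
        simp only [List.head?_cons, Option.some.injEq] at hhead
        simp only [List.tail_cons] at hw'
        exact Or.inl ⟨i, by rw [hLi, hhead, hw'], htrig⟩

/-- let `L_n` be a family of tuples whose words are globally
pairwise distinct.  If some `T_L` with `L ∈ L_n` entails `C ⊑ ∃σ.M` (for a
word `σ` of length `m ≤ n` and `C` over the signature), then either there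
are `L ∈ L_n` and `i` with `σ = σ_i` and `C` has `A`, `A_i` or `B_i` as a
top-level conjunct, or `∅ ⊨ C ⊑ ∃σ.M`. -/
theorem TL_exM_entailment (n m : ℕ) (hn : 1 ≤ n) (hm : m ≤ n)
    (Lfam : Set (Fin n → List RN))
    (hlen : ∀ L ∈ Lfam, ∀ i, (L i).length = n)
    (hdist : ∀ L ∈ Lfam, ∀ L' ∈ Lfam, ∀ i j : Fin n, L i = L' j → L = L' ∧ i = j)
    (σ : List RN) (hσ : σ.length = m) (c : ELC CN RN) (hsig : InSig n c)
    (hex : ∃ L ∈ Lfam, Entails (TL n L) c (exSeq σ (.cn .M))) :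
    (∃ L ∈ Lfam, ∃ i : Fin n, σ = L i ∧
      (TopConj (.cn .A) c ∨ TopConj (.cn (.Ai i.1)) c ∨ TopConj (.cn (.Bi i.1)) c)) ∨
    Entails [] c (exSeq σ (.cn .M)) := by
  obtain ⟨L, hL, hent⟩ := hex
  have hlen' : ∀ i, (L i).length = n := hlen L hL
  have hCsem : c ∈ (canI n L).sem c := canonical n L c c (.base c)
  have hpath : pathM n L σ c :=
    (sem_exSeqM n L σ c).mp (hent (canI n L) (canI_models n L hlen' hn) hCsem)
  rcases key n L hlen' σ (hσ ▸ hm) c hpath with ⟨i, hσi, htrig⟩ | hent'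
  · exact Or.inl ⟨L, hL, i, hσi, htrig⟩
  · exact Or.inr hent'
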